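/- (Richter's Theorem) Let X be a measurable space, let V be a finite-dimensional real vector space of measurable functions X → ℝ with dim V = d, and let μ be a (nonnegative) measure on X such that every f ∈ V is μ-integrable. Then there exist k ≤ d, weights c₁,…,c_k > 0, and points x₁,…,x_k ∈ X such that ∫_X f dμ = Σ_{i=1}^{k} c_i·f(x_i) for all f ∈ V. -/

import Mathlib

open MeasureTheory

open Set Module
open scoped RealInnerProductSpace

section RepCone

variable {X : Type*} {H : Type*} [NormedAddCommGroup H] [InnerProductSpace ℝ H]

/-- The set of finite nonnegative combinations of values of `T` on `A`. -/
def repCone (T : X → H) (A : Set X) : Set H :=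
  {z | ∃ (k : ℕ) (c : Fin k → ℝ) (xs : Fin k → X),
    (∀ i, 0 ≤ c i) ∧ (∀ i, xs i ∈ A) ∧ z = ∑ i, c i • T (xs i)}

lemma sum_mem_repCone {T : X → H} {A : Set X} {ι : Type*} [Fintype ι]
    (c : ι → ℝ) (xs : ι → X) (hc : ∀ i, 0 ≤ c i) (hxs : ∀ i, xs i ∈ A) :
    (∑ i, c i • T (xs i)) ∈ repCone T A := by
  classical
  let e := (Fintype.equivFin ι).symm
  refine ⟨Fintype.card ι, c ∘ e, xs ∘ e, fun i => hc _, fun i => hxs _, ?_⟩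
  rw [← Equiv.sum_comp e (fun i => c i • T (xs i))]
  rfl

lemma zero_mem_repCone (T : X → H) (A : Set X) : (0 : H) ∈ repCone T A :=
  ⟨0, Fin.elim0, Fin.elim0, fun i => i.elim0, fun i => i.elim0, by simp⟩

lemma mem_repCone_of_mem {T : X → H} {A : Set X} {x : X} (hx : x ∈ A) :
    T x ∈ repCone T A := by
  have := sum_mem_repCone (T := T) (A := A) (ι := Fin 1) (fun _ => (1:ℝ)) (fun _ => x)
    (fun _ => zero_le_one) (fun _ => hx)
  simpa using this

lemma add_mem_repCone {T : X → H} {A : Set X} {z₁ z₂ : H}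
    (h₁ : z₁ ∈ repCone T A) (h₂ : z₂ ∈ repCone T A) : z₁ + z₂ ∈ repCone T A := by
  obtain ⟨k₁, c₁, xs₁, hc₁, hxs₁, rfl⟩ := h₁
  obtain ⟨k₂, c₂, xs₂, hc₂, hxs₂, rfl⟩ := h₂
  have := sum_mem_repCone (T := T) (A := A) (ι := Fin k₁ ⊕ Fin k₂)
    (Sum.elim c₁ c₂) (Sum.elim xs₁ xs₂)
    (fun i => by cases i <;> simp [hc₁, hc₂]) (fun i => by cases i <;> simp [hxs₁, hxs₂])
  simpa [Fintype.sum_sum_type] using this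

lemma smul_mem_repCone {T : X → H} {A : Set X} {a : ℝ} (ha : 0 ≤ a) {z : H}
    (h : z ∈ repCone T A) : a • z ∈ repCone T A := by
  obtain ⟨k, c, xs, hc, hxs, rfl⟩ := h
  have := sum_mem_repCone (T := T) (A := A) (fun i => a * c i) xs
    (fun i => mul_nonneg ha (hc i)) hxs
  simpa [Finset.smul_sum, mul_smul] using this

lemma convex_repCone (T : X → H) (A : Set X) : Convex ℝ (repCone T A) :=
  fun _ h₁ _ h₂ a b ha hb _ => add_mem_repCone (smul_mem_repCone ha h₁) (smul_mem_repCone hb h₂)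

/-- `repCone` as a `ConvexCone`. -/
def repConvexCone (T : X → H) (A : Set X) : ConvexCone ℝ H where
  carrier := repCone T A
  smul_mem' := fun _ hc _ hz => smul_mem_repCone hc.le hz
  add_mem' := fun _ h₁ _ h₂ => add_mem_repCone h₁ h₂

lemma repCone_subset_span (T : X → H) (A : Set X) :
    repCone T A ⊆ (Submodule.span ℝ (T '' A) : Set H) := by
  rintro z ⟨k, c, xs, hc, hxs, rfl⟩
  exact Submodule.sum_mem _ fun i _ => Submodule.smul_mem _ _
    (Submodule.subset_span ⟨xs i, hxs i, rfl⟩)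

end RepCone

section Carath

variable {H : Type*} [AddCommGroup H] [Module ℝ H] {ι : Type*} [DecidableEq ι]

/-- Carathéodory-type reduction for conical combinations. -/
lemma carath_cone (v : ι → H) (s : Finset ι) :
    ∀ (c : ι → ℝ), (∀ i ∈ s, 0 ≤ c i) →
    ∃ (t : Finset ι) (c' : ι → ℝ), t ⊆ s ∧ (∀ i ∈ t, 0 < c' i) ∧
      LinearIndependent ℝ (fun i : t => v i) ∧
      ∑ i ∈ t, c' i • v i = ∑ i ∈ s, c i • v i := by
  classical
  induction s using Finset.strongInductionOn with
  | _ s IH =>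
  intro c hc
  by_cases hpos : ∀ i ∈ s, 0 < c i
  · by_cases hli : LinearIndependent ℝ (fun i : s => v i)
    · exact ⟨s, c, Finset.Subset.refl s, hpos, hli, rfl⟩
    · -- find a nontrivial relation with a positive coefficient
      obtain ⟨g₀, hg₀sum, j₀, hj₀⟩ := Fintype.not_linearIndependent_iff.mp hli
      have hrel : ∀ (g : s → ℝ), (∑ i : s, g i • v i = 0) → (∃ i, g i ≠ 0) →
          (∃ i : s, 0 < g i) →
          ∃ (t : Finset ι) (c' : ι → ℝ), t ⊆ s ∧ (∀ i ∈ t, 0 < c' i) ∧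
            LinearIndependent ℝ (fun i : t => v i) ∧
            ∑ i ∈ t, c' i • v i = ∑ i ∈ s, c i • v i := by
        rintro g hgsum hgne ⟨ip, hip⟩
        -- extend g to ι
        set gg : ι → ℝ := fun i => if h : i ∈ s then g ⟨i, h⟩ else 0 with hgg
        have hggsum : ∑ i ∈ s, gg i • v i = 0 := by
          rw [← Finset.sum_attach s (fun i => gg i • v i)]
          simpa [hgg] using hgsum
        have hP : (ip : ι) ∈ s.filter (fun i => 0 < gg i) := by
          simp only [Finset.mem_filter]
          exact ⟨ip.2, by simpa [hgg, ip.2] using hip⟩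
        obtain ⟨i₀, hi₀mem, hi₀min⟩ := Finset.exists_min_image
          (s.filter (fun i => 0 < gg i)) (fun i => c i / gg i) ⟨ip, hP⟩
        rw [Finset.mem_filter] at hi₀mem
        obtain ⟨hi₀s, hi₀pos⟩ := hi₀mem
        set τ : ℝ := c i₀ / gg i₀ with hτ
        have hτpos : 0 < τ := div_pos (hpos i₀ hi₀s) hi₀pos
        set c'' : ι → ℝ := fun i => c i - τ * gg i with hc''
        have hc''nonneg : ∀ i ∈ s, 0 ≤ c'' i := by
          intro i hi
          by_cases hgi : 0 < gg i
          · have := hi₀min i (Finset.mem_filter.mpr ⟨hi, hgi⟩)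
            have : τ * gg i ≤ c i := by
              rw [hτ]
              calc (c i₀ / gg i₀) * gg i ≤ (c i / gg i) * gg i := by
                    exact mul_le_mul_of_nonneg_right this hgi.le
                _ = c i := div_mul_cancel₀ _ hgi.ne'
            simpa [hc''] using sub_nonneg.mpr this
          · push_neg at hgi
            have : τ * gg i ≤ 0 := mul_nonpos_of_nonneg_of_nonpos hτpos.le hgi
            have := sub_nonneg.mpr (this.trans (hpos i hi).le)
            simp only [hc'']
            nlinarith [hpos i hi]
        have hc''i₀ : c'' i₀ = 0 := by
          simp only [hc'', hτ]
          field_simp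
          ring
        have hsum'' : ∑ i ∈ s, c'' i • v i = ∑ i ∈ s, c i • v i := by
          simp only [hc'', sub_smul, Finset.sum_sub_distrib, mul_smul]
          rw [← Finset.smul_sum, hggsum, smul_zero, sub_zero]
        set s' : Finset ι := s.filter (fun i => 0 < c'' i) with hs'
        have hs'sub : s' ⊂ s := by
          refine Finset.ssubset_iff_of_subset (Finset.filter_subset _ _) |>.mpr ?_
          exact ⟨i₀, hi₀s, by simp [hs', hc''i₀]⟩
        obtain ⟨t, c', hts', hc'pos, hli', hsum'⟩ := IH s' hs'sub c''
          (fun i hi => ((Finset.mem_filter.mp hi).2).le)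
        refine ⟨t, c', hts'.trans (Finset.filter_subset _ _), hc'pos, hli', ?_⟩
        rw [hsum', ← hsum'']
        refine Finset.sum_subset (Finset.filter_subset _ _) ?_
        intro i hi hni
        have : c'' i = 0 := by
          by_contra hne
          exact hni (Finset.mem_filter.mpr ⟨hi, lt_of_le_of_ne (hc''nonneg i hi) (Ne.symm hne)⟩)
        simp [this]
      by_cases hex : ∃ i : s, 0 < g₀ i
      · exact hrel g₀ hg₀sum ⟨j₀, hj₀⟩ hex
      · push_neg at hex
        refine hrel (-g₀) (by simpa using hg₀sum) ⟨j₀, by simpa using hj₀⟩ ?_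
        refine ⟨j₀, ?_⟩
        have := hex j₀
        simp only [Pi.neg_apply]
        rcases lt_or_eq_of_le this with h | h
        · linarith
        · exact absurd h hj₀
  · -- drop the zero coefficients first
    push_neg at hpos
    set s₁ : Finset ι := s.filter (fun i => 0 < c i) with hs₁
    have hs₁sub : s₁ ⊂ s := by
      obtain ⟨i, his, hile⟩ := hpos
      refine Finset.ssubset_iff_of_subset (Finset.filter_subset _ _) |>.mpr ?_
      exact ⟨i, his, by simp only [hs₁, Finset.mem_filter, not_and]; exact fun _ => not_lt.mpr hile⟩
    obtain ⟨t, c', hts, hc'pos, hli, hsum⟩ := IH s₁ hs₁sub c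
      (fun i hi => (hc i (Finset.filter_subset _ _ hi)))
    refine ⟨t, c', hts.trans (Finset.filter_subset _ _), hc'pos, hli, ?_⟩
    rw [hsum]
    refine Finset.sum_subset (Finset.filter_subset _ _) ?_
    intro i hi hni
    have : c i = 0 := by
      by_contra hne
      exact hni (Finset.mem_filter.mpr ⟨hi, lt_of_le_of_ne (hc i hi) (Ne.symm hne)⟩)
    simp [this]

end Carath

section Core

variable {X : Type*} [MeasurableSpace X]

lemma richter_core (μ : Measure X) (n : ℕ) :
    ∀ (H : Type) [inst1 : NormedAddCommGroup H] [inst2 : InnerProductSpace ℝ H] [inst3 : FiniteDimensional ℝ H],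
    finrank ℝ H ≤ n →
    ∀ (A : Set X), MeasurableSet A → μ Aᶜ = 0 →
    ∀ (T : X → H) (y : H),
    (∀ w : H, Measurable fun x => ⟪w, T x⟫) →
    (∀ w : H, Integrable (fun x => ⟪w, T x⟫) μ) →
    (∀ w : H, ⟪w, y⟫ = ∫ x, ⟪w, T x⟫ ∂μ) →
    y ∈ repCone T A := by
  induction n with
  | zero =>
    intro H _ _ _ hrank A hA hAc T y hmeasT hintT hy
    have hss : Subsingleton H := finrank_zero_iff.mp (Nat.le_zero.mp hrank)
    have : y = 0 := Subsingleton.elim _ _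
    rw [this]; exact zero_mem_repCone T A
  | succ n IH =>
    intro H _ _ _ hrank A hA hAc T y hmeasT hintT hy
    have hAae : ∀ᵐ x ∂μ, x ∈ A := by
      rw [ae_iff]
      have : {x | ¬ x ∈ A} = Aᶜ := rfl
      rw [this]; exact hAc
    have hnn : ∀ w : H, (∀ x ∈ A, 0 ≤ ⟪T x, w⟫) → 0 ≤ ⟪w, y⟫ := by
      intro w hw
      rw [hy]
      refine integral_nonneg_of_ae ?_
      filter_upwards [hAae] with x hx
      rw [real_inner_comm]; exact hw x hx
    by_cases hcase : ∃ w : H, w ≠ 0 ∧ (∀ x ∈ A, 0 ≤ ⟪T x, w⟫) ∧ ⟪w, y⟫ ≤ 0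
    · -- Case A : dimension reduction
      obtain ⟨w, hw0, hwnn, hwy⟩ := hcase
      have hy0 : ⟪w, y⟫ = 0 := le_antisymm hwy (hnn w hwnn)
      have hf0 : (fun x => ⟪w, T x⟫) =ᵐ[μ] 0 := by
        rw [← integral_eq_zero_iff_of_nonneg_ae ?_ (hintT w)]
        · rw [← hy]; exact hy0
        · filter_upwards [hAae] with x hx
          have := hwnn x hx
          rw [real_inner_comm] at this
          exact this
      set A' : Set X := A ∩ {x | ⟪w, T x⟫ = 0} with hA'
      have hA'meas : MeasurableSet A' := by
        refine hA.inter ?_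
        have : {x | ⟪w, T x⟫ = 0} = (fun x => ⟪w, T x⟫) ⁻¹' {0} := rfl
        rw [this]
        exact (hmeasT w) (measurableSet_singleton 0)
      have hA'c : μ A'ᶜ = 0 := by
        have h1 : μ {x | ¬ ⟪w, T x⟫ = 0} = 0 := by
          have := hf0
          rw [Filter.EventuallyEq, ae_iff] at this
          simpa using this
        refine measure_mono_null ?_ (measure_union_null hAc h1)
        intro x hx
        rw [hA', Set.compl_inter] at hx
        rcases hx with hx | hx
        · exact Or.inl hx
        · exact Or.inr hx
      set H' := (ℝ ∙ w)ᗮ with hH'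
      have hwne : w ∉ H' := by
        intro h
        exact hw0 (inner_self_eq_zero.mp
          ((Submodule.mem_orthogonal _ _).mp h w (Submodule.mem_span_singleton_self w)))
      have hrank' : finrank ℝ H' ≤ n := by
        have hne : H' ≠ ⊤ := by
          intro h
          exact hwne (by rw [h]; exact Submodule.mem_top)
        have := Submodule.finrank_lt hne
        omega
      have key : ∀ (w' : H') (v : H),
          ⟪w', Submodule.orthogonalProjection H' v⟫ = ⟪(w' : H), v⟫ := by
        intro w' v
        have hv : v - (Submodule.orthogonalProjection H' v : H) ∈ H'ᗮ :=
          Submodule.sub_starProjection_mem_orthogonal (K := H') v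
        have h0 : ⟪(w' : H), v - (Submodule.orthogonalProjection H' v : H)⟫ = 0 :=
          (Submodule.mem_orthogonal _ _).mp hv (w' : H) w'.2
        rw [inner_sub_right] at h0
        have hco : ⟪w', Submodule.orthogonalProjection H' v⟫
            = ⟪(w' : H), (Submodule.orthogonalProjection H' v : H)⟫ := rfl
        rw [hco]
        linarith
      have hsub : ∀ x : X, x ∈ A' → T x ∈ H' := by
        intro x hx
        refine (Submodule.mem_orthogonal _ _).mpr ?_
        intro u hu
        obtain ⟨a, rfl⟩ := Submodule.mem_span_singleton.mp hu
        rw [real_inner_smul_left, hx.2, mul_zero]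
      set T' : X → H' := fun x => Submodule.orthogonalProjection H' (T x) with hT'
      have hkey2 : ∀ w' : H', (fun x => ⟪w', T' x⟫) = fun x => ⟪(w' : H), T x⟫ :=
        fun w' => funext fun x => key w' (T x)
      have hyH' : y ∈ H' := by
        refine (Submodule.mem_orthogonal _ _).mpr ?_
        intro u hu
        obtain ⟨a, rfl⟩ := Submodule.mem_span_singleton.mp hu
        rw [real_inner_smul_left, hy0, mul_zero]
      obtain ⟨k, c, xs, hc, hxs, hrep⟩ := IH H' hrank' A' hA'meas hA'c T'
        (Submodule.orthogonalProjection H' y)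
        (fun w' => by rw [hkey2 w']; exact hmeasT (w' : H))
        (fun w' => by rw [hkey2 w']; exact hintT (w' : H))
        (fun w' => by rw [key w' y, hkey2 w']; exact hy (w' : H))
      refine ⟨k, c, xs, hc, fun i => (hxs i).1, ?_⟩
      have hyproj : ((Submodule.orthogonalProjection H' y : H') : H) = y :=
        Submodule.starProjection_eq_self_iff.mpr hyH'
      have hTproj : ∀ i, ((T' (xs i) : H') : H) = T (xs i) := fun i =>
        Submodule.starProjection_eq_self_iff.mpr (hsub _ (hxs i))
      calc y = ((Submodule.orthogonalProjection H' y : H') : H) := hyproj.symm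
        _ = ((∑ i, c i • T' (xs i) : H') : H) := by rw [hrep]
        _ = ∑ i, c i • ((T' (xs i) : H') : H) := by push_cast; rfl
        _ = ∑ i, c i • T (xs i) := by simp_rw [hTproj]
    · -- Case B : interior point
      push_neg at hcase
      set C : ConvexCone ℝ H := repConvexCone T A with hCdef
      set K : ConvexCone ℝ H := C.closure with hKdef
      have hKc : (K : Set H) = closure (repCone T A) := ConvexCone.coe_closure C
      have hdd : (ProperCone.innerDual (ProperCone.innerDual (K : Set H) : Set H) : Set H) = K := by
        let P : ProperCone ℝ H :=
          { carrier := K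
            add_mem' := fun ha hb => K.add_mem ha hb
            zero_mem' := by
              show (0 : H) ∈ (K : Set H)
              rw [hKc]; exact subset_closure (zero_mem_repCone T A)
            smul_mem' := fun c x hx => by
              show (c.1 : ℝ) • x ∈ (K : Set H)
              rcases c.2.eq_or_lt with h | h
              · rw [← h, zero_smul]
                show (0 : H) ∈ (K : Set H)
                rw [hKc]; exact subset_closure (zero_mem_repCone T A)
              · exact K.smul_mem h hx
            isClosed' := by
              show IsClosed (K : Set H)
              rw [hKc]; exact isClosed_closure }
        exact congrArg (fun C : ProperCone ℝ H => (C : Set H)) (ProperCone.innerDual_innerDual P)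
      have memK : ∀ z : H, (∀ w, w ∈ ProperCone.innerDual (K : Set H) → 0 ≤ ⟪w, z⟫) →
          z ∈ (K : Set H) := by
        intro z hz
        have : z ∈ (ProperCone.innerDual (ProperCone.innerDual (K : Set H) : Set H) : Set H) :=
          SetLike.mem_coe.mpr (ProperCone.mem_innerDual.mpr fun ⦃x⦄ hx => hz x hx)
        rw [hdd] at this
        exact this
      have hdualsub : ∀ w, w ∈ ProperCone.innerDual (K : Set H) → ∀ x ∈ A, 0 ≤ ⟪T x, w⟫ := by
        intro w hw x hx
        exact ProperCone.mem_innerDual.mp hw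
          (by rw [hKc]; exact subset_closure (mem_repCone_of_mem hx) : T x ∈ (K : Set H))
      set S : Set H := {w : H | ‖w‖ = 1 ∧ ∀ x ∈ A, 0 ≤ ⟪T x, w⟫} with hSdef
      have hScl : IsClosed S := by
        have h1 : IsClosed {w : H | ‖w‖ = 1} := isClosed_eq continuous_norm continuous_const
        have h2 : IsClosed {w : H | ∀ x ∈ A, 0 ≤ ⟪T x, w⟫} := by
          have he : {w : H | ∀ x ∈ A, 0 ≤ ⟪T x, w⟫}
              = ⋂ x ∈ A, {w : H | 0 ≤ ⟪T x, w⟫} := by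
            ext u; simp
          rw [he]
          exact isClosed_biInter fun x _ =>
            isClosed_le continuous_const (Continuous.inner continuous_const continuous_id)
        exact h1.inter h2
      have hSbd : Bornology.IsBounded S := by
        refine (Metric.isBounded_closedBall (x := (0:H)) (r := 1)).subset ?_
        intro u hu
        rw [Metric.mem_closedBall, dist_zero_right, hu.1]
      have hScomp : IsCompact S := Metric.isCompact_of_isClosed_isBounded hScl hSbd
      have hunit : ∀ w : H, w ≠ 0 → (∀ x ∈ A, 0 ≤ ⟪T x, w⟫) → (‖w‖⁻¹ • w) ∈ S := by
        intro w hw0 hwnn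
        constructor
        · rw [norm_smul, Real.norm_eq_abs, abs_of_nonneg (by positivity),
            inv_mul_cancel₀ (norm_ne_zero_iff.mpr hw0)]
        · intro x hx
          rw [real_inner_smul_right]
          exact mul_nonneg (by positivity) (hwnn x hx)
      have hyK : y ∈ interior (K : Set H) := by
        rcases eq_empty_or_nonempty S with hSe | hSne
        · have hall : ∀ z : H, z ∈ (K : Set H) := by
            intro z
            apply memK
            intro w hw
            by_cases hw0 : w = 0
            · simp [hw0]
            · exfalso
              have := hunit w hw0 (hdualsub w hw)
              rw [hSe] at this
              exact this
          have : (K : Set H) = univ := eq_univ_of_forall hall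
          rw [this, interior_univ]
          trivial
        · obtain ⟨w₀, hw₀S, hw₀min⟩ := hScomp.exists_isMinOn hSne
            ((Continuous.inner continuous_id continuous_const).continuousOn
              (s := S) (f := fun w : H => ⟪w, y⟫))
          have hw₀ne : w₀ ≠ 0 := by
            intro h
            have := hw₀S.1
            rw [h, norm_zero] at this
            norm_num at this
          have hεpos : 0 < ⟪w₀, y⟫ := hcase w₀ hw₀ne hw₀S.2
          refine mem_interior.mpr ⟨Metric.ball y ⟪w₀, y⟫, ?_, Metric.isOpen_ball,
            Metric.mem_ball_self hεpos⟩
          intro z hz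
          apply memK
          intro w hw
          by_cases hw0 : w = 0
          · simp [hw0]
          · have hwS := hunit w hw0 (hdualsub w hw)
            have h1 : ⟪w₀, y⟫ ≤ ⟪‖w‖⁻¹ • w, y⟫ := hw₀min hwS
            have h2 : |⟪‖w‖⁻¹ • w, z - y⟫| ≤ ‖z - y‖ := by
              have h := abs_real_inner_le_norm (‖w‖⁻¹ • w) (z - y)
              rwa [hwS.1, one_mul] at h
            have h3 : ‖z - y‖ < ⟪w₀, y⟫ := by
              rw [← dist_eq_norm]
              exact Metric.mem_ball.mp hz
            have h4 : 0 < ⟪‖w‖⁻¹ • w, z⟫ := by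
              have hsplit : ⟪‖w‖⁻¹ • w, z - y⟫
                  = ⟪‖w‖⁻¹ • w, z⟫ - ⟪‖w‖⁻¹ • w, y⟫ := inner_sub_right _ _ _
              have := abs_le.mp h2
              nlinarith
            have h5 : ⟪w, z⟫ = ‖w‖ * ⟪‖w‖⁻¹ • w, z⟫ := by
              rw [real_inner_smul_left]
              have : ‖w‖ ≠ 0 := norm_ne_zero_iff.mpr hw0
              field_simp
            rw [h5]
            exact le_of_lt (mul_pos (norm_pos_iff.mpr hw0) h4)
      have hspan : Submodule.span ℝ (T '' A) = ⊤ := by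
        apply Submodule.eq_top_of_nonempty_interior'
        refine ⟨y, ?_⟩
        have hKsub : (K : Set H) ⊆ (Submodule.span ℝ (T '' A) : Set H) := by
          rw [hKc]
          exact closure_minimal (repCone_subset_span T A)
            (Submodule.closed_of_finiteDimensional _)
        exact interior_mono hKsub hyK
      -- build an interior point of the cone itself
      let J := (linearIndepOn_empty ℝ id).extend (empty_subset (T '' A))
      let b : Basis J ℝ H := Basis.ofSpan hspan.ge
      haveI : Fintype J := FiniteDimensional.fintypeBasisIndex b
      have hbj : ∀ j : J, b j = (j : H) := fun j => Basis.ofSpan_apply_self hspan.ge j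
      have hmemTA : ∀ j : J, (j : H) ∈ T '' A := fun j =>
        ((linearIndepOn_empty ℝ id).extend_subset (empty_subset _)) j.2
      have hmemTA' : ∀ j : J, ∃ x, x ∈ A ∧ T x = (j : H) := fun j => hmemTA j
      choose xf hxfA hxfT using hmemTA'
      set p : H := ∑ j : J, (j : H) with hp
      have hpmem : p ∈ interior (repCone T A) := by
        set U : Set H := ⋂ j : J, (b.coord j) ⁻¹' (Ioi 0) with hU
        have hUopen : IsOpen U := isOpen_iInter_of_finite fun j =>
          (isOpen_Ioi).preimage (b.coord j).continuous_of_finiteDimensional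
        have hpU : p ∈ U := by
          rw [hU, mem_iInter]
          intro j
          have hrepr : b.repr p j = 1 := by
            rw [hp]
            have : (∑ j' : J, ((j' : H))) = ∑ j' : J, b j' := by simp_rw [hbj]
            rw [this, map_sum]
            simp only [Basis.repr_self, Finsupp.finset_sum_apply, Finsupp.single_apply]
            simp
          simp only [mem_preimage, Basis.coord_apply, mem_Ioi, hrepr]
          norm_num
        have hUsub : U ⊆ repCone T A := by
          intro z hz
          rw [hU, mem_iInter] at hz
          have hz' : ∀ j : J, 0 < b.repr z j := by
            intro j
            have := hz j
            simpa [Basis.coord_apply] using this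
          have hzsum : z = ∑ j : J, (b.repr z j) • T (xf j) := by
            conv_lhs => rw [← b.sum_repr z]
            congr 1
            funext j
            rw [hbj j, hxfT j]
          rw [hzsum]
          exact sum_mem_repCone _ _ (fun j => (hz' j).le) hxfA
        exact mem_interior.mpr ⟨U, hUsub, hUopen, hpU⟩
      -- move slightly past y inside the closure and use the interior point p
      obtain ⟨δ, hδpos, hδ⟩ := Metric.isOpen_iff.mp isOpen_interior y hyK
      set t₀ : ℝ := δ / (2 * (‖y - p‖ + 1)) with ht₀
      have ht₀pos : 0 < t₀ := by positivity
      set y' : H := y + t₀ • (y - p) with hy'def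
      have hy'K : y' ∈ closure (repCone T A) := by
        have hball : y' ∈ Metric.ball y δ := by
          rw [Metric.mem_ball, dist_eq_norm]
          have h1 : y' - y = t₀ • (y - p) := by rw [hy'def]; abel
          rw [h1, norm_smul, Real.norm_eq_abs, abs_of_pos ht₀pos, ht₀]
          rw [div_mul_eq_mul_div, div_lt_iff₀ (by positivity)]
          nlinarith [norm_nonneg (y - p), hδpos]
        have := interior_subset (hδ hball)
        rwa [hKc] at this
      have hseg : y ∈ openSegment ℝ p y' := by
        have h1t : (1:ℝ) + t₀ ≠ 0 := by positivity
        refine ⟨t₀ / (1 + t₀), 1 / (1 + t₀), by positivity, by positivity,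
          by field_simp; ring, ?_⟩
        rw [hy'def]
        match_scalars <;> field_simp <;> ring
      have := (convex_repCone T A).openSegment_interior_closure_subset_interior
        hpmem hy'K hseg
      exact interior_subset this

end Core


/-- **Richter's Theorem**: a moment functional on a `d`-dimensional vector space of
measurable functions is represented by a `k`-atomic measure with `k ≤ d` atoms. -/
theorem richter (X : Type*) [MeasurableSpace X] (d : ℕ)
    (V : Submodule ℝ (X → ℝ)) (hmeas : ∀ f ∈ V, Measurable f)
    (hfin : FiniteDimensional ℝ V) (hdim : Module.finrank ℝ V = d)
    (μ : Measure X) (hint : ∀ f ∈ V, Integrable f μ) :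
    ∃ (k : ℕ) (_ : k ≤ d) (c : Fin k → ℝ) (x : Fin k → X),
      (∀ i, 0 < c i) ∧
      ∀ f ∈ V, (∫ a, f a ∂μ) = ∑ i, c i * f (x i) := by
  classical
  haveI := hfin
  let b : Basis (Fin d) ℝ V := (Module.finBasis ℝ V).reindex (finCongr hdim)
  let H : Type := EuclideanSpace ℝ (Fin d)
  let T : X → H := fun x => (WithLp.toLp 2 fun i => ((b i : X → ℝ) x) : EuclideanSpace ℝ (Fin d))
  let y : H := (WithLp.toLp 2 fun i => ∫ a, (b i : X → ℝ) a ∂μ : EuclideanSpace ℝ (Fin d))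
  have hbint : ∀ i, Integrable ((b i : X → ℝ)) μ := fun i => hint _ (b i).2
  have hinner : ∀ (w z : H), ⟪w, z⟫ = ∑ i, w i * z i := by
    intro w z
    rw [PiLp.inner_apply]
    simp [mul_comm]
  have hmeasT : ∀ w : H, Measurable fun x => ⟪w, T x⟫ := by
    intro w
    have he : (fun x => ⟪w, T x⟫) = fun x => ∑ i, w i * (b i : X → ℝ) x :=
      funext fun x => hinner w (T x)
    rw [he]
    exact Finset.measurable_sum _ (fun i _ => (hmeas _ (b i).2).const_mul (w i))
  have hintT : ∀ w : H, Integrable (fun x => ⟪w, T x⟫) μ := by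
    intro w
    have he : (fun x => ⟪w, T x⟫) = fun x => ∑ i, w i * (b i : X → ℝ) x :=
      funext fun x => hinner w (T x)
    rw [he]
    exact integrable_finset_sum _ (fun i _ => (hbint i).const_mul (w i))
  have hy : ∀ w : H, ⟪w, y⟫ = ∫ x, ⟪w, T x⟫ ∂μ := by
    intro w
    rw [hinner w y]
    calc ∑ i, w i * y i = ∑ i, ∫ a, w i * (b i : X → ℝ) a ∂μ := by
          refine Finset.sum_congr rfl fun i _ => ?_
          rw [integral_const_mul]
      _ = ∫ a, ∑ i, w i * (b i : X → ℝ) a ∂μ :=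
          (integral_finset_sum _ (fun i _ => (hbint i).const_mul (w i))).symm
      _ = ∫ x, ⟪w, T x⟫ ∂μ := by
          refine integral_congr_ae (Filter.Eventually.of_forall fun a => ?_)
          exact (hinner w (T a)).symm
  obtain ⟨k₀, c₀, xs₀, hc₀, -, hrep⟩ :=
    richter_core μ d H (le_of_eq finrank_euclideanSpace_fin) Set.univ MeasurableSet.univ
      (by simp) T y hmeasT hintT hy
  obtain ⟨t, c', hts, hc'pos, hli, hsum⟩ :=
    carath_cone (fun i : Fin k₀ => T (xs₀ i)) Finset.univ c₀ (fun i _ => hc₀ i)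
  have hkle : t.card ≤ d := by
    have h1 := hli.fintype_card_le_finrank
    rwa [Fintype.card_coe, finrank_euclideanSpace_fin] at h1
  let e := t.equivFin
  refine ⟨t.card, hkle, fun i => c' ((e.symm i) : Fin k₀),
    fun i => xs₀ ((e.symm i) : Fin k₀), fun i => hc'pos _ (e.symm i).2, ?_⟩
  intro f hf
  set v : V := ⟨f, hf⟩ with hv
  set w : H := (WithLp.toLp 2 fun i => b.repr v i : EuclideanSpace ℝ (Fin d)) with hw
  have hfeq : ∀ xx : X, f xx = ∑ i, b.repr v i * (b i : X → ℝ) xx := by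
    intro xx
    have h1 : ((∑ i, b.repr v i • b i : V) : X → ℝ) xx = f xx := by rw [b.sum_repr v]
    rw [← h1]
    have h2 : ((∑ i, b.repr v i • b i : V) : X → ℝ)
        = ∑ i, b.repr v i • ((b i : X → ℝ)) := by
      push_cast
      rfl
    rw [h2]
    simp [Finset.sum_apply]
  have hyt : y = ∑ j ∈ t, c' j • T (xs₀ j) := hrep.trans hsum.symm
  have hInt : ∫ a, f a ∂μ = ⟪w, y⟫ := by
    rw [hinner w y]
    calc ∫ a, f a ∂μ = ∫ a, ∑ i, b.repr v i * (b i : X → ℝ) a ∂μ := by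
          congr 1; funext a; exact hfeq a
      _ = ∑ i, ∫ a, b.repr v i * (b i : X → ℝ) a ∂μ :=
          integral_finset_sum _ (fun i _ => (hbint i).const_mul _)
      _ = ∑ i, b.repr v i * ∫ a, (b i : X → ℝ) a ∂μ := by
          refine Finset.sum_congr rfl fun i _ => ?_
          rw [integral_const_mul]
      _ = ∑ i, w i * y i := rfl
  have hfpt : ∀ xx : X, f xx = ⟪w, T xx⟫ := by
    intro xx
    rw [hinner w (T xx)]
    exact hfeq xx
  rw [hInt, hyt, inner_sum]
  simp_rw [real_inner_smul_right]
  have hconv : ∑ j ∈ t, c' j * ⟪w, T (xs₀ j)⟫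
      = ∑ i : Fin t.card, c' ((e.symm i) : Fin k₀) * ⟪w, T (xs₀ ((e.symm i) : Fin k₀))⟫ := by
    rw [← Finset.sum_coe_sort t (fun j => c' j * ⟪w, T (xs₀ j)⟫)]
    exact (Equiv.sum_comp e.symm
      (fun j : t => c' (j : Fin k₀) * ⟪w, T (xs₀ (j : Fin k₀))⟫)).symm
  rw [hconv]
  refine Finset.sum_congr rfl fun i _ => ?_
  rw [hfpt]
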